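/- Given a neutral trajectory datum, the function w(t) = Σ_{j=1}^n q_j(t) δh_j(t) is bounded on [0, ∞). -/

import Mathlib

open Matrix Filter Set

/-- The collision matrix `R_i` acting on coordinates `i` and `i+1` (0-based),
with 2×2 block `((γ, 1−γ), (1+γ, −γ))`, and agreeing with the identity elsewhere. -/
def collMat (n : ℕ) (i : ℕ) (γ : ℝ) : Matrix (Fin n) (Fin n) ℝ :=
  Matrix.of fun j k =>
    if j.val = i ∧ k.val = i then γ
    else if j.val = i ∧ k.val = i + 1 then 1 - γ
    else if j.val = i + 1 ∧ k.val = i then 1 + γ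
    else if j.val = i + 1 ∧ k.val = i + 1 then -γ
    else if j = k then 1 else 0

/-- A neutral trajectory datum for the falling-ball system with `n ≥ 2` particles of
positive masses `m`: a strictly increasing sequence of collision times `0 < t_1 < t_2 < ⋯`
tending to `∞`, collision types `ty k ∈ {0, 1, …, n−1}` (where `ty k = 0` is a floor
collision and `ty k = i + 1` is a collision of the 0-based particles `i` and `i + 1`),
a bound `C > 0`, and functions `q, v, δh : [0, ∞) → ℝⁿ` satisfying conditions
(a)–(f) of the paper.  The fields `vminus k`, `dhminus k` record the left limits
`v(t_k⁻)`, `δh(t_k⁻)`. -/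
structure NeutralDatum (n : ℕ) (m : Fin n → ℝ) : Type where
  hn : 2 ≤ n
  hm : ∀ j, 0 < m j
  /-- collision times (0-indexed: `tc 0` is the paper's `t_1`) -/
  tc : ℕ → ℝ
  /-- collision types -/
  ty : ℕ → ℕ
  C : ℝ
  q : ℝ → Fin n → ℝ
  v : ℝ → Fin n → ℝ
  dh : ℝ → Fin n → ℝ
  /-- the left limit `v(t_k⁻)` -/
  vminus : ℕ → Fin n → ℝ
  /-- the left limit `δh(t_k⁻)` -/
  dhminus : ℕ → Fin n → ℝ
  tc_pos : 0 < tc 0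
  tc_mono : StrictMono tc
  tc_tendsto : Tendsto tc atTop atTop
  ty_lt : ∀ k, ty k < n
  C_pos : 0 < C
  /-- (a) `q` is continuous on `[0, ∞)` -/
  q_cont : ∀ j, ContinuousOn (fun t => q t j) (Ici 0)
  /-- (a) `0 ≤ q_j(t) ≤ C` -/
  q_bdd : ∀ j, ∀ t, 0 ≤ t → 0 ≤ q t j ∧ q t j ≤ C
  /-- (b) between collisions, `q' = v` -/
  q_deriv : ∀ t, 0 ≤ t → t ∉ range tc → ∀ j,
    HasDerivWithinAt (fun s => q s j) (v t j) (Ici 0) t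
  /-- (b) between collisions, `v' = -1` componentwise -/
  v_deriv : ∀ t, 0 ≤ t → t ∉ range tc → ∀ j,
    HasDerivWithinAt (fun s => v s j) (-1) (Ici 0) t
  /-- (b) between collisions, `δh` is constant -/
  dh_deriv : ∀ t, 0 ≤ t → t ∉ range tc → ∀ j,
    HasDerivWithinAt (fun s => dh s j) 0 (Ici 0) t
  /-- (c) `v` is right-continuous -/
  v_rc : ∀ t, 0 ≤ t → ∀ j, Tendsto (fun s => v s j) (nhdsWithin t (Ici t)) (nhds (v t j))
  /-- (c) `δh` is right-continuous -/
  dh_rc : ∀ t, 0 ≤ t → ∀ j, Tendsto (fun s => dh s j) (nhdsWithin t (Ici t)) (nhds (dh t j))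
  /-- (c) `v` has left limit `vminus k` at `tc k` -/
  v_ll : ∀ k j, Tendsto (fun s => v s j) (nhdsWithin (tc k) (Iio (tc k))) (nhds (vminus k j))
  /-- (c) `δh` has left limit `dhminus k` at `tc k` -/
  dh_ll : ∀ k j, Tendsto (fun s => dh s j) (nhdsWithin (tc k) (Iio (tc k))) (nhds (dhminus k j))
  /-- (d) collision of particles `i`, `i+1` (0-based): `q_i = q_{i+1}`,
  `v⁺ = R_i v⁻` and `δh⁺ = R_iᵀ δh⁻` -/
  coll_pair : ∀ k, ∀ i : ℕ, ∀ hi : i + 1 < n, ty k = i + 1 →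
    q (tc k) ⟨i, Nat.lt_of_succ_lt hi⟩ = q (tc k) ⟨i + 1, hi⟩ ∧
    v (tc k) = (collMat n i ((m ⟨i, Nat.lt_of_succ_lt hi⟩ - m ⟨i + 1, hi⟩) /
        (m ⟨i, Nat.lt_of_succ_lt hi⟩ + m ⟨i + 1, hi⟩))) *ᵥ vminus k ∧
    dh (tc k) = (collMat n i ((m ⟨i, Nat.lt_of_succ_lt hi⟩ - m ⟨i + 1, hi⟩) /
        (m ⟨i, Nat.lt_of_succ_lt hi⟩ + m ⟨i + 1, hi⟩)))ᵀ *ᵥ dhminus k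
  /-- (e) floor collision: `q_1 = 0`, `v_1⁺ = -v_1⁻`, the other velocities are
  unchanged, `δh⁺ = δh⁻` and `δh_1 = 0` -/
  coll_floor : ∀ k, ty k = 0 →
    q (tc k) ⟨0, by omega⟩ = 0 ∧
    v (tc k) ⟨0, by omega⟩ = -vminus k ⟨0, by omega⟩ ∧
    (∀ j : Fin n, j ≠ ⟨0, by omega⟩ → v (tc k) j = vminus k j) ∧
    dh (tc k) = dhminus k ∧
    dh (tc k) ⟨0, by omega⟩ = 0
  /-- (f) `∑ j, δh_j(t) = 0` -/
  dh_sum : ∀ t, 0 ≤ t → ∑ j, dh t j = 0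

variable {n : ℕ}

lemma collMat_entry (i : ℕ) (hi : i + 1 < n) (γ : ℝ) (k j : Fin n) :
    collMat n i γ k j =
      if j = (⟨i, Nat.lt_of_succ_lt hi⟩ : Fin n) then
        (if k = (⟨i, Nat.lt_of_succ_lt hi⟩ : Fin n) then γ
         else if k = (⟨i+1, hi⟩ : Fin n) then 1 + γ else 0)
      else if j = (⟨i+1, hi⟩ : Fin n) then
        (if k = (⟨i, Nat.lt_of_succ_lt hi⟩ : Fin n) then 1 - γ
         else if k = (⟨i+1, hi⟩ : Fin n) then -γ else 0)
      else if k = j then 1 else 0 := by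
  simp only [collMat, Matrix.of_apply, Fin.ext_iff]
  split_ifs <;> first | rfl | omega

lemma collMat_transpose_mulVec (i : ℕ) (hi : i + 1 < n) (γ : ℝ) (x : Fin n → ℝ)
    (j : Fin n) :
    ((collMat n i γ)ᵀ *ᵥ x) j =
      if j = (⟨i, Nat.lt_of_succ_lt hi⟩ : Fin n) then
        γ * x ⟨i, Nat.lt_of_succ_lt hi⟩ + (1 + γ) * x ⟨i+1, hi⟩
      else if j = (⟨i+1, hi⟩ : Fin n) then
        (1 - γ) * x ⟨i, Nat.lt_of_succ_lt hi⟩ - γ * x ⟨i+1, hi⟩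
      else x j := by
  classical
  set i0 : Fin n := ⟨i, Nat.lt_of_succ_lt hi⟩ with hi0
  set i1 : Fin n := ⟨i+1, hi⟩ with hi1
  have hne : i0 ≠ i1 := by simp [hi0, hi1, Fin.ext_iff]
  have hmv : ((collMat n i γ)ᵀ *ᵥ x) j = ∑ k, collMat n i γ k j * x k := by
    simp [Matrix.mulVec, dotProduct, Matrix.transpose_apply]
  rw [hmv]
  by_cases hj0 : j = i0
  · subst hj0
    simp only [if_pos rfl]
    have : ∀ k : Fin n, collMat n i γ k i0 * x k =
        (if k = i0 then γ * x k else 0) + (if k = i1 then (1+γ) * x k else 0) := by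
      intro k
      rw [collMat_entry i hi γ k i0, if_pos rfl]
      by_cases h0 : k = i0
      · simp [h0, hne, if_neg (Ne.symm hne), ← hi0, ← hi1]
      · by_cases h1 : k = i1 <;> simp [h0, h1, ← hi0, Ne.symm hne, ← hi1]
    rw [Finset.sum_congr rfl (fun k _ => this k), Finset.sum_add_distrib]
    simp [Finset.sum_ite_eq']
  · rw [if_neg hj0]
    by_cases hj1 : j = i1
    · subst hj1
      rw [if_pos rfl]
      have : ∀ k : Fin n, collMat n i γ k i1 * x k =
          (if k = i0 then (1-γ) * x k else 0) + (if k = i1 then (-γ) * x k else 0) := by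
        intro k
        rw [collMat_entry i hi γ k i1, if_neg (Ne.symm hne), if_pos rfl]
        by_cases h0 : k = i0
        · simp [h0, hne, if_neg (Ne.symm hne), ← hi0, ← hi1]
        · by_cases h1 : k = i1 <;> simp [h0, h1, ← hi0, Ne.symm hne, ← hi1]
      rw [Finset.sum_congr rfl (fun k _ => this k), Finset.sum_add_distrib]
      simp [Finset.sum_ite_eq']
      ring
    · rw [if_neg hj1]
      have : ∀ k : Fin n, collMat n i γ k j * x k = (if k = j then x k else 0) := by
        intro k
        rw [collMat_entry i hi γ k j, if_neg hj0, if_neg hj1]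
        by_cases h : k = j <;> simp [h]
      rw [Finset.sum_congr rfl (fun k _ => this k)]
      simp [Finset.sum_ite_eq']

lemma sum_split_pair (i0 i1 : Fin n) (hne : i0 ≠ i1) (f g : Fin n → ℝ)
    (hfg : ∀ j, j ≠ i0 → j ≠ i1 → f j = g j)
    (hpair : f i0 + f i1 = g i0 + g i1) :
    ∑ j, f j = ∑ j, g j := by
  classical
  have hmem : i1 ∈ Finset.univ.erase i0 := Finset.mem_erase.2 ⟨Ne.symm hne, Finset.mem_univ _⟩
  have h : ∀ f : Fin n → ℝ, ∑ j, f j =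
      (∑ j ∈ (Finset.univ.erase i0).erase i1, f j) + f i1 + f i0 := by
    intro f
    rw [← Finset.sum_erase_add _ _ (Finset.mem_univ i0), ← Finset.sum_erase_add _ _ hmem]
  rw [h f, h g]
  have : ∑ j ∈ (Finset.univ.erase i0).erase i1, f j =
      ∑ j ∈ (Finset.univ.erase i0).erase i1, g j := by
    apply Finset.sum_congr rfl
    intro j hj
    rw [Finset.mem_erase, Finset.mem_erase] at hj
    exact hfg j hj.2.1 hj.1
  rw [this]
  linarith

lemma quad_inv_sum (i : ℕ) (hi : i + 1 < n) (m : Fin n → ℝ) (hm : ∀ j, 0 < m j)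
    (x : Fin n → ℝ) :
    ∑ j, ((collMat n i ((m ⟨i, Nat.lt_of_succ_lt hi⟩ - m ⟨i+1, hi⟩) /
        (m ⟨i, Nat.lt_of_succ_lt hi⟩ + m ⟨i+1, hi⟩)))ᵀ *ᵥ x) j ^ 2 / m j
      = ∑ j, (x j) ^ 2 / m j := by
  classical
  set i0 : Fin n := ⟨i, Nat.lt_of_succ_lt hi⟩ with hi0
  set i1 : Fin n := ⟨i+1, hi⟩ with hi1
  have hne : i0 ≠ i1 := by simp [hi0, hi1, Fin.ext_iff]
  set γ : ℝ := (m i0 - m i1) / (m i0 + m i1) with hγ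
  apply sum_split_pair i0 i1 hne
  · intro j hj0 hj1
    rw [collMat_transpose_mulVec i hi γ x j, if_neg hj0, if_neg hj1]
  · rw [collMat_transpose_mulVec i hi γ x i0, if_pos rfl,
      collMat_transpose_mulVec i hi γ x i1, if_neg (Ne.symm hne), if_pos rfl]
    have hp := hm i0
    have hq := hm i1
    have hpq : m i0 + m i1 ≠ 0 := by positivity
    rw [hγ]
    field_simp
    ring

variable {m : Fin n → ℝ}

lemma dh_eq_of_no_coll (D : NeutralDatum n m) {a b : ℝ} (ha : 0 ≤ a) (hab : a ≤ b)
    (hfree : ∀ k, D.tc k ∉ Set.Ioc a b) (j : Fin n) : D.dh b j = D.dh a j := by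
  rcases eq_or_lt_of_le hab with rfl | hab
  · rfl
  have key : ∀ c, a < c → c ≤ b → D.dh b j = D.dh c j := by
    intro c hac hcb
    have hc0 : (0:ℝ) < c := lt_of_le_of_lt ha hac
    have hnotcoll : ∀ x ∈ Set.Icc c b, x ∉ Set.range D.tc := by
      rintro x hx ⟨k, rfl⟩
      exact hfree k ⟨lt_of_lt_of_le hac hx.1, hx.2⟩
    have hx0 : ∀ x ∈ Set.Icc c b, (0:ℝ) ≤ x := fun x hx => le_trans hc0.le hx.1
    have hcont : ContinuousOn (fun s => D.dh s j) (Set.Icc c b) := by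
      intro x hx
      exact ((D.dh_deriv x (hx0 x hx) (hnotcoll x hx) j).continuousWithinAt).mono
        (fun y hy => hx0 y hy)
    have hderiv : ∀ x ∈ Set.Ico c b, HasDerivWithinAt (fun s => D.dh s j) 0 (Set.Ici x) x := by
      intro x hx
      have hx' : x ∈ Set.Icc c b := ⟨hx.1, hx.2.le⟩
      exact (D.dh_deriv x (hx0 x hx') (hnotcoll x hx') j).mono
        (Set.Ici_subset_Ici.mpr (hx0 x hx'))
    exact constant_of_has_deriv_right_zero hcont hderiv b ⟨hcb, le_refl b⟩
  have hrc : Tendsto (fun s => D.dh s j) (nhdsWithin a (Set.Ioi a)) (nhds (D.dh a j)) :=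
    (D.dh_rc a ha j).mono_left (nhdsWithin_mono a Set.Ioi_subset_Ici_self)
  have heq : ∀ᶠ s in nhdsWithin a (Set.Ioi a), D.dh s j = D.dh b j := by
    filter_upwards [Ioc_mem_nhdsGT_of_mem ⟨le_refl a, hab⟩] with s hs
    exact (key s hs.1 hs.2).symm
  exact (tendsto_nhds_unique (hrc.congr' heq) tendsto_const_nhds).symm

lemma dhminus_eq (D : NeutralDatum n m) {a : ℝ} {k : ℕ} (ha : 0 ≤ a) (hak : a < D.tc k)
    (hfree : ∀ k', D.tc k' ∉ Set.Ioo a (D.tc k)) (j : Fin n) :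
    D.dhminus k j = D.dh a j := by
  have heq : ∀ᶠ s in nhdsWithin (D.tc k) (Set.Iio (D.tc k)), D.dh s j = D.dh a j := by
    filter_upwards [Ioo_mem_nhdsLT_of_mem ⟨hak, le_refl _⟩] with s hs
    exact dh_eq_of_no_coll D ha hs.1.le
      (fun k' hk' => hfree k' ⟨hk'.1, lt_of_le_of_lt hk'.2 hs.2⟩) j
  exact tendsto_nhds_unique ((D.dh_ll k j).congr' heq) tendsto_const_nhds

lemma phi_coll (D : NeutralDatum n m) (k : ℕ) :
    ∑ j, (D.dh (D.tc k) j) ^ 2 / m j = ∑ j, (D.dhminus k j) ^ 2 / m j := by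
  rcases Nat.eq_zero_or_pos (D.ty k) with h0 | hpos
  · rw [(D.coll_floor k h0).2.2.2.1]
  · set i : ℕ := D.ty k - 1 with hidef
    have hty : D.ty k = i + 1 := by omega
    have hi : i + 1 < n := by have := D.ty_lt k; omega
    have hdh := (D.coll_pair k i hi hty).2.2
    rw [hdh]
    exact quad_inv_sum i hi m D.hm (D.dhminus k)

lemma phi_tc (D : NeutralDatum n m) (k : ℕ) :
    ∑ j, (D.dh (D.tc k) j) ^ 2 / m j = ∑ j, (D.dh 0 j) ^ 2 / m j := by
  induction k with
  | zero =>
    rw [phi_coll D 0]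
    apply Finset.sum_congr rfl
    intro j _
    rw [dhminus_eq D (le_refl 0) D.tc_pos (fun k' hk' => absurd hk'.2
      (not_lt.2 (D.tc_mono.monotone (Nat.zero_le k')))) j]
  | succ k ih =>
    rw [phi_coll D (k+1)]
    have h1 : ∀ j, D.dhminus (k+1) j = D.dh (D.tc k) j := by
      intro j
      apply dhminus_eq D (le_of_lt (lt_of_lt_of_le D.tc_pos (D.tc_mono.monotone (Nat.zero_le k))))
        (D.tc_mono (Nat.lt_succ_self k))
      intro k' hk'
      have h2 : k < k' := D.tc_mono.lt_iff_lt.mp hk'.1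
      have h3 : k' < k + 1 := D.tc_mono.lt_iff_lt.mp hk'.2
      omega
    rw [Finset.sum_congr rfl (fun j _ => by rw [h1 j])]
    exact ih

lemma phi_all (D : NeutralDatum n m) (t : ℝ) (ht : 0 ≤ t) :
    ∑ j, (D.dh t j) ^ 2 / m j = ∑ j, (D.dh 0 j) ^ 2 / m j := by
  by_cases htc : t < D.tc 0
  · apply Finset.sum_congr rfl
    intro j _
    rw [dh_eq_of_no_coll D (le_refl 0) ht (fun k hk => absurd (lt_of_le_of_lt hk.2 htc)
      (not_lt.2 (D.tc_mono.monotone (Nat.zero_le k)))) j]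
  · push_neg at htc
    have h1 : ∃ N, t < D.tc N := (D.tc_tendsto.eventually (eventually_gt_atTop t)).exists
    set N := Nat.find h1 with hN
    have hNs : t < D.tc N := Nat.find_spec h1
    have hN0 : N ≠ 0 := by
      intro h
      rw [h] at hNs
      exact absurd htc (not_le.2 hNs)
    set K := N - 1 with hK
    have hKt : D.tc K ≤ t := by
      by_contra h
      exact Nat.find_min h1 (show K < N by omega) (not_le.mp h)
    have hK0 : (0:ℝ) ≤ D.tc K := le_of_lt (lt_of_lt_of_le D.tc_pos (D.tc_mono.monotone (Nat.zero_le K)))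
    have heq : ∀ j, D.dh t j = D.dh (D.tc K) j := by
      intro j
      apply dh_eq_of_no_coll D hK0 hKt
      intro k' hk'
      have h2 : K < k' := D.tc_mono.lt_iff_lt.mp hk'.1
      have h3 : D.tc k' < D.tc N := lt_of_le_of_lt hk'.2 hNs
      have h4 : k' < N := D.tc_mono.lt_iff_lt.mp h3
      omega
    rw [Finset.sum_congr rfl (fun j _ => by rw [heq j])]
    exact phi_tc D K


/-- given a neutral trajectory datum, the function
`w(t) = ∑ j, q_j(t) δh_j(t)` is bounded on `[0, ∞)`. -/
theorem neutral_w_bounded (n : ℕ) (m : Fin n → ℝ) (D : NeutralDatum n m) :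
    ∃ K : ℝ, ∀ t : ℝ, 0 ≤ t → |∑ j, D.q t j * D.dh t j| ≤ K := by
  classical
  set Φ : ℝ := ∑ j, (D.dh 0 j) ^ 2 / m j with hΦ
  have hΦ0 : 0 ≤ Φ := Finset.sum_nonneg (fun j _ => by have := D.hm j; positivity)
  refine ⟨D.C * ∑ j, Real.sqrt (m j * Φ), ?_⟩
  intro t ht
  have hdh_bd : ∀ j, |D.dh t j| ≤ Real.sqrt (m j * Φ) := by
    intro j
    have hterm : (D.dh t j) ^ 2 / m j ≤ Φ := by
      rw [hΦ, ← phi_all D t ht]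
      apply Finset.single_le_sum (f := fun j => (D.dh t j) ^ 2 / m j)
        (fun j _ => by have := D.hm j; positivity) (Finset.mem_univ j)
    have hmj := D.hm j
    have hsq : (D.dh t j) ^ 2 ≤ m j * Φ := by
      rw [div_le_iff₀ hmj] at hterm
      linarith [hterm]
    calc |D.dh t j| = Real.sqrt ((D.dh t j) ^ 2) := by
          rw [Real.sqrt_sq_eq_abs]
      _ ≤ Real.sqrt (m j * Φ) := Real.sqrt_le_sqrt hsq
  calc |∑ j, D.q t j * D.dh t j| ≤ ∑ j, |D.q t j * D.dh t j| :=
        Finset.abs_sum_le_sum_abs _ _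
    _ ≤ ∑ j, D.C * Real.sqrt (m j * Φ) := by
        apply Finset.sum_le_sum
        intro j _
        rw [abs_mul]
        have hq := D.q_bdd j t ht
        have h1 : |D.q t j| ≤ D.C := by rw [abs_of_nonneg hq.1]; exact hq.2
        exact mul_le_mul h1 (hdh_bd j) (abs_nonneg _) (le_of_lt D.C_pos)
    _ = D.C * ∑ j, Real.sqrt (m j * Φ) := by rw [Finset.mul_sum]
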